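/- arXiv:0804.4165 — 5 statements merged into one kernel-verified Lean document; each statement's English description precedes it below -/
import Mathlib

section
/- For every morphism σ: T → S of n-ordinals (1 ≤ n), there exists a factorisation σ = ν ∘ π where π: T → T' is a quasibijection (a map of n-ordinals that is a bijection of underlying sets), ν: T' → S is order preserving (preserves the induced total orders), and π preserves the total order on each fiber of ν. -/
/-- An `n`-ordinal: a set with relations `<_0, …, <_{n-1}` satisfying nonreflexivity,
trichotomy over all levels, and the rule `a <_p b, b <_q c ⟹ a <_{min p q} c`. -/
structure NOrdinal (n : ℕ) (T : Type) : Type where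
  rel : Fin n → T → T → Prop
  irrefl : ∀ p a, ¬ rel p a a
  trich : ∀ a b : T, a ≠ b →
    ∃! pd : Fin n × Bool, if pd.2 then rel pd.1 a b else rel pd.1 b a
  trans : ∀ p q a b c, rel p a b → rel q b c → rel (min p q) a c

/-- The total order induced by an `n`-ordinal: `a < b` iff `a <_r b` for some `r`. -/
def NOrdinal.tlt {n : ℕ} {T : Type} (O : NOrdinal n T) (a b : T) : Prop :=
  ∃ r, O.rel r a b

/-- A map of `n`-ordinals: `i <_p j` implies `σ i <_r σ j` for some `r ≥ p`,
or `σ i = σ j`, or `σ j <_r σ i` for some `r > p`. -/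
def IsNOrdMap {n : ℕ} {T S : Type} (OT : NOrdinal n T) (OS : NOrdinal n S)
    (σ : T → S) : Prop :=
  ∀ p a b, OT.rel p a b →
    (∃ r, p ≤ r ∧ OS.rel r (σ a) (σ b)) ∨ σ a = σ b ∨
    (∃ r, p < r ∧ OS.rel r (σ b) (σ a))
namespace NOrdinal

theorem asymm' {n : ℕ} {T : Type} (O : NOrdinal n T) {p q : Fin n} {a b : T}
    (h1 : O.rel p a b) (h2 : O.rel q b a) : False := by
  have hab : a ≠ b := by rintro rfl; exact O.irrefl p a h1
  obtain ⟨pd, hpd, huniq⟩ := O.trich a b hab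
  have e1 : (p, true) = pd := huniq (p, true) (by simpa using h1)
  have e2 : (q, false) = pd := huniq (q, false) (by simpa using h2)
  rw [← e1] at e2
  exact Bool.noConfusion (congrArg Prod.snd e2)

theorem tlt_comparable {n : ℕ} {T : Type} (O : NOrdinal n T) {a b : T} (hab : a ≠ b) :
    O.tlt a b ∨ O.tlt b a := by
  obtain ⟨⟨p, d⟩, hpd, _⟩ := O.trich a b hab
  cases d
  · exact Or.inr ⟨p, by simpa using hpd⟩
  · exact Or.inl ⟨p, by simpa using hpd⟩

theorem tlt_asymm {n : ℕ} {T : Type} (O : NOrdinal n T) {a b : T}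
    (h1 : O.tlt a b) (h2 : O.tlt b a) : False := by
  obtain ⟨p, hp⟩ := h1; obtain ⟨q, hq⟩ := h2; exact O.asymm' hp hq

theorem tlt_trans' {n : ℕ} {T : Type} (O : NOrdinal n T) {a b c : T}
    (h1 : O.tlt a b) (h2 : O.tlt b c) : O.tlt a c := by
  obtain ⟨p, hp⟩ := h1; obtain ⟨q, hq⟩ := h2; exact ⟨min p q, O.trans p q a b c hp hq⟩

end NOrdinal
theorem factorisation {n : ℕ} (hn : 1 ≤ n) {T S : Type} [Finite T] [Finite S]
    (OT : NOrdinal n T) (OS : NOrdinal n S) (σ : T → S)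
    (hσ : IsNOrdMap OT OS σ) :
    ∃ (O' : NOrdinal n T) (π : T ≃ T) (ν : T → S),
      -- π is a quasibijection (a bijective map of n-ordinals)
      IsNOrdMap OT O' π ∧
      -- ν is a map of n-ordinals which is order preserving for the total orders
      IsNOrdMap O' OS ν ∧
      (∀ a b : T, O'.tlt a b → OS.tlt (ν a) (ν b) ∨ ν a = ν b) ∧
      -- π preserves the total order on each fiber of ν
      (∀ a b : T, ν (π a) = ν (π b) → OT.tlt a b → O'.tlt (π a) (π b)) ∧
      -- σ = ν ∘ π
      σ = ν ∘ π := by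
  classical
  set top : Fin n := ⟨n - 1, Nat.sub_lt hn one_pos⟩ with htop
  have htople : ∀ p : Fin n, p ≤ top := fun p => Nat.le_sub_one_of_lt p.isLt
  refine ⟨{ rel := fun r a b =>
              if σ a = σ b then r = top ∧ OT.tlt a b else OS.rel r (σ a) (σ b),
            irrefl := ?_, trich := ?_, trans := ?_ }, Equiv.refl T, σ,
          ?_, ?_, ?_, ?_, ?_⟩
  · -- irrefl
    intro p a h
    simp only [if_pos rfl] at h
    exact OT.tlt_asymm h.2 h.2
  · -- trich
    intro a b hab
    by_cases h : σ a = σ b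
    · simp only [h, eq_self_iff_true, if_true]
      rcases OT.tlt_comparable hab with hlt | hlt
      · refine ⟨(top, true), by simpa using hlt, ?_⟩
        rintro ⟨q, d⟩ hq
        cases d
        · simp only [Bool.false_eq_true, if_false] at hq
          exact absurd hq.2 (fun h2 => OT.tlt_asymm hlt h2)
        · simp only [if_true] at hq
          simp [hq.1]
      · refine ⟨(top, false), by simpa using hlt, ?_⟩
        rintro ⟨q, d⟩ hq
        cases d
        · simp only [Bool.false_eq_true, if_false] at hq
          simp [hq.1]
        · simp only [if_true] at hq
          exact absurd hq.2 (fun h2 => OT.tlt_asymm hlt h2)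
    · have h' : σ b ≠ σ a := fun e => h e.symm
      simp only [if_neg h, if_neg h']
      exact OS.trich (σ a) (σ b) h
  · -- trans
    intro p q a b c hab hbc
    by_cases h1 : σ a = σ b <;> by_cases h2 : σ b = σ c
    · simp only [if_pos h1, if_pos h2] at hab hbc
      have : σ a = σ c := h1.trans h2
      simp only [if_pos this]
      exact ⟨by rw [hab.1, hbc.1, min_self], OT.tlt_trans' hab.2 hbc.2⟩
    · simp only [if_pos h1, if_neg h2] at hab hbc
      have hac : σ a ≠ σ c := by rw [h1]; exact h2
      simp only [if_neg hac]
      rw [hab.1, min_eq_right (htople q), h1]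
      exact hbc
    · simp only [if_neg h1, if_pos h2] at hab hbc
      have hac : σ a ≠ σ c := by rw [← h2]; exact h1
      simp only [if_neg hac]
      rw [hbc.1, min_eq_left (htople p), ← h2]
      exact hab
    · simp only [if_neg h1, if_neg h2] at hab hbc
      by_cases hac : σ a = σ c
      · exact absurd (hac ▸ hbc) (fun h => OS.asymm' hab h)
      · simp only [if_neg hac]
        exact OS.trans p q _ _ _ hab hbc
  · -- π is a map of n-ordinals
    intro p a b hab
    simp only [Equiv.refl_apply]
    by_cases h : σ a = σ b
    · have hab' : a ≠ b := by rintro rfl; exact OT.irrefl p a hab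
      exact Or.inl ⟨top, htople p, by show (if σ a = σ b then _ else _); rw [if_pos h]; exact ⟨rfl, ⟨p, hab⟩⟩⟩
    · rcases hσ p a b hab with ⟨r, hpr, hr⟩ | heq | ⟨r, hpr, hr⟩
      · exact Or.inl ⟨r, hpr, by show (if σ a = σ b then _ else _); rw [if_neg h]; exact hr⟩
      · exact absurd heq h
      · have h' : σ b ≠ σ a := fun e => h e.symm
        exact Or.inr (Or.inr ⟨r, hpr, by show (if σ b = σ a then _ else _); rw [if_neg h']; exact hr⟩)
  · -- ν is a map of n-ordinals
    intro p a b hab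
    by_cases h : σ a = σ b
    · exact Or.inr (Or.inl h)
    · simp only [if_neg h] at hab
      exact Or.inl ⟨p, le_refl p, hab⟩
  · -- ν is order preserving
    intro a b ⟨r, hr⟩
    by_cases h : σ a = σ b
    · exact Or.inr h
    · simp only [if_neg h] at hr
      exact Or.inl ⟨r, hr⟩
  · -- π preserves the total order on each fiber
    intro a b h hlt
    simp only [Equiv.refl_apply] at h ⊢
    refine ⟨top, ?_⟩
    show if σ a = σ b then top = top ∧ OT.tlt a b else OS.rel top (σ a) (σ b)
    rw [if_pos h]; exact ⟨rfl, hlt⟩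
  · -- σ = ν ∘ π
    rfl
end

section
/- In a composite of quasibijections of 2-ordinals T → S → R, if the first map reverses the total order of two elements i, j of T, then the second map cannot reverse the order of their images; consequently the set of pairs whose order is reversed by the composite is the disjoint union of the pairs reversed by the first map and the pairs (of images) reversed by the second map. -/
lemma NOrdinal.rel_ne {n : ℕ} {T : Type} (O : NOrdinal n T) {p : Fin n} {a b : T}
    (h : O.rel p a b) : a ≠ b := by
  rintro rfl; exact O.irrefl p a h

lemma NOrdinal.asymm {n : ℕ} {T : Type} (O : NOrdinal n T) {p q : Fin n} {a b : T}
    (h1 : O.rel p a b) (h2 : O.rel q b a) : False := by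
  obtain ⟨pd, _, hu⟩ := O.trich a b (O.rel_ne h1)
  have h1' := hu (p, true) (by simpa using h1)
  have h2' := hu (q, false) (by simpa using h2)
  rw [← h2'] at h1'
  simpa using congrArg Prod.snd h1'

/-- If a quasibijection reverses a pair, it reverses it at level 1 (for 2-ordinals). -/
lemma rev_level_one {T S : Type} (OT : NOrdinal 2 T) (OS : NOrdinal 2 S)
    (σ : T ≃ S) (hσ : IsNOrdMap OT OS σ) {p : Fin 2} {a b : T}
    (h : OT.rel p a b) (hrev : OS.tlt (σ b) (σ a)) : OS.rel 1 (σ b) (σ a) := by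
  obtain ⟨s, hs⟩ := hrev
  rcases hσ p a b h with ⟨r, _, hr⟩ | heq | ⟨r, hpr, hr⟩
  · exact absurd (OS.asymm hr hs) (fun h => h)
  · exact absurd heq.symm (OS.rel_ne hs)
  · have : r = 1 := by omega
    rwa [this] at hr

theorem quasibijection_comp_reversals {T S R : Type}
    (OT : NOrdinal 2 T) (OS : NOrdinal 2 S) (OR : NOrdinal 2 R)
    (σ : T ≃ S) (ξ : S ≃ R)
    (hσ : IsNOrdMap OT OS σ) (hξ : IsNOrdMap OS OR ξ) :
    -- if σ reverses the total order of i, j then ξ cannot reverse the order of the images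
    (∀ i j : T, OT.tlt i j → OS.tlt (σ j) (σ i) → ¬ OR.tlt (ξ (σ i)) (ξ (σ j))) ∧
    -- the pairs reversed by the composite are the disjoint union of the pairs reversed
    -- by σ and the pairs (of images) reversed by ξ
    (∀ i j : T, OT.tlt i j →
      (OR.tlt (ξ (σ j)) (ξ (σ i)) ↔
        OS.tlt (σ j) (σ i) ∨ (OS.tlt (σ i) (σ j) ∧ OR.tlt (ξ (σ j)) (ξ (σ i))))) := by
  -- key: if σ reverses i<j then ξ preserves the image pair
  have key : ∀ i j : T, OT.tlt i j → OS.tlt (σ j) (σ i) →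
      OR.tlt (ξ (σ j)) (ξ (σ i)) ∧ ¬ OR.tlt (ξ (σ i)) (ξ (σ j)) := by
    intro i j ⟨p, hp⟩ hrev
    have h1 : OS.rel 1 (σ j) (σ i) := rev_level_one OT OS σ hσ hp hrev
    rcases hξ 1 (σ j) (σ i) h1 with ⟨r, _, hr⟩ | heq | ⟨r, hr1, _⟩
    · refine ⟨⟨r, hr⟩, ?_⟩
      rintro ⟨s, hs⟩
      exact OR.asymm hr hs
    · exact absurd (ξ.injective heq) (OS.rel_ne h1)
    · exact absurd hr1 (by omega)
  constructor
  · exact fun i j hij hrev => (key i j hij hrev).2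
  · intro i j hij
    constructor
    · intro hR
      obtain ⟨p, hp⟩ := hij
      rcases OS.trich (σ i) (σ j) (fun h => OT.rel_ne hp (σ.injective h)) with
        ⟨⟨q, d⟩, hq, _⟩
      cases d with
      | true => exact Or.inr ⟨⟨q, by simpa using hq⟩, hR⟩
      | false => exact Or.inl ⟨q, by simpa using hq⟩
    · rintro (hrev | ⟨_, hR⟩)
      · exact (key i j hij hrev).1
      · exact hR
end

section
/- The Fox–Neuwirth cell FN_T associated to an n-ordinal T with k elements, consisting of configurations (x_1,...,x_k) of distinct points in R^n such that for i <_p j in T the unit vector u_{ij}(x) = (x_j - x_i)/|x_j - x_i| lies in the open hemisphere {y ∈ S^{n-1} : y_1 = ... = y_p = 0, y_{p+1} > 0}, is a convex subset of (R^n)^k. -/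
/-- The unit vector from `x i` to `x j`. -/
noncomputable def uvec {n k : ℕ} (x : Fin k → EuclideanSpace ℝ (Fin n))
    (i j : Fin k) : EuclideanSpace ℝ (Fin n) :=
  (‖x j - x i‖)⁻¹ • (x j - x i)

/-- The Fox–Neuwirth cell of an `n`-ordinal structure on `{1, …, k}`: configurations of
distinct points such that for `i <_p j` the unit vector `u_{ij}` lies in the open
hemisphere with first `p` coordinates zero and `(p+1)`-st coordinate positive. -/
def FoxNeuwirth {n k : ℕ} (O : NOrdinal n (Fin k)) :
    Set (Fin k → EuclideanSpace ℝ (Fin n)) :=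
  { x | (∀ i j : Fin k, i ≠ j → x i ≠ x j) ∧
        ∀ p (i j : Fin k), O.rel p i j →
          (∀ q : Fin n, (q : ℕ) < (p : ℕ) → uvec x i j q = 0) ∧ 0 < uvec x i j p }
theorem foxNeuwirth_convex {n k : ℕ} (O : NOrdinal n (Fin k)) :
    Convex ℝ (FoxNeuwirth O) := by
  intro x hx y hy a b ha hb hab
  obtain ⟨hxd, hxr⟩ := hx
  obtain ⟨hyd, hyr⟩ := hy
  set z : Fin k → EuclideanSpace ℝ (Fin n) := a • x + b • y with hz
  have key : ∀ p (i j : Fin k), O.rel p i j →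
      (∀ q : Fin n, (q : ℕ) < (p : ℕ) → (z j - z i) q = 0) ∧ 0 < (z j - z i) p := by
    intro p i j hrel
    have hij : i ≠ j := fun h => O.irrefl p i (h ▸ hrel)
    have hxij := hxr p i j hrel
    have hyij := hyr p i j hrel
    have hxne : x j - x i ≠ 0 := sub_ne_zero.mpr (Ne.symm (hxd i j hij))
    have hyne : y j - y i ≠ 0 := sub_ne_zero.mpr (Ne.symm (hyd i j hij))
    have hxn : (0:ℝ) < ‖x j - x i‖ := norm_pos_iff.mpr hxne
    have hyn : (0:ℝ) < ‖y j - y i‖ := norm_pos_iff.mpr hyne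
    have hxinv : (0:ℝ) < ‖x j - x i‖⁻¹ := inv_pos.mpr hxn
    have hyinv : (0:ℝ) < ‖y j - y i‖⁻¹ := inv_pos.mpr hyn
    have hxc : ∀ q, uvec x i j q = ‖x j - x i‖⁻¹ * (x j - x i) q := fun q => rfl
    have hyc : ∀ q, uvec y i j q = ‖y j - y i‖⁻¹ * (y j - y i) q := fun q => rfl
    have hx0 : ∀ q : Fin n, (q : ℕ) < (p : ℕ) → (x j - x i) q = 0 := by
      intro q hq
      have := hxij.1 q hq
      rw [hxc q] at this
      exact (mul_eq_zero.mp this).resolve_left (ne_of_gt hxinv)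
    have hy0 : ∀ q : Fin n, (q : ℕ) < (p : ℕ) → (y j - y i) q = 0 := by
      intro q hq
      have := hyij.1 q hq
      rw [hyc q] at this
      exact (mul_eq_zero.mp this).resolve_left (ne_of_gt hyinv)
    have hxp : 0 < (x j - x i) p := by
      have := hxij.2; rw [hxc p] at this; nlinarith
    have hyp : 0 < (y j - y i) p := by
      have := hyij.2; rw [hyc p] at this; nlinarith
    have hzd : ∀ q : Fin n,
        (z j - z i) q = a * (x j - x i) q + b * (y j - y i) q := by
      intro q
      simp only [hz, Pi.add_apply, Pi.smul_apply]
      simp [PiLp.sub_apply, PiLp.add_apply, PiLp.smul_apply, smul_eq_mul]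
      ring
    constructor
    · intro q hq
      rw [hzd q, hx0 q hq, hy0 q hq]; ring
    · rw [hzd p]
      rcases ha.eq_or_lt with rfl | ha'
      · simp only [zero_add] at hab; subst hab; nlinarith
      · nlinarith
  have zne : ∀ p (i j : Fin k), O.rel p i j → z i ≠ z j := by
    intro p i j hrel h
    have := (key p i j hrel).2
    rw [h] at this
    simp at this
  refine ⟨?_, ?_⟩
  · intro i j hij
    obtain ⟨⟨p, d⟩, hpd, _⟩ := O.trich i j hij
    cases d with
    | true => exact zne p i j (by simpa using hpd)
    | false => exact (zne p j i (by simpa using hpd)).symm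
  · intro p i j hrel
    have hne : z j - z i ≠ 0 := sub_ne_zero.mpr (Ne.symm (zne p i j hrel))
    have hn : (0:ℝ) < ‖z j - z i‖ := norm_pos_iff.mpr hne
    have hinv : (0:ℝ) < ‖z j - z i‖⁻¹ := inv_pos.mpr hn
    have hc : ∀ q, uvec z i j q = ‖z j - z i‖⁻¹ * (z j - z i) q := fun q => rfl
    obtain ⟨h0, hp⟩ := key p i j hrel
    constructor
    · intro q hq; rw [hc q, h0 q hq, mul_zero]
    · rw [hc p]; exact mul_pos hinv hp
end

section
/- The configuration space Conf_k(R^n) is the union over all n-ordinals T with underlying set {1,...,k} (all n-ordinal structures, i.e., including all relabelings by permutations) of the Fox–Neuwirth cells FN_T, and these cells are pairwise disjoint. -/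
section Aux

variable {n k : ℕ}

/-- `v` vanishes below coordinate `p` and is positive at `p`. -/
def PosAt (p : Fin n) (v : EuclideanSpace ℝ (Fin n)) : Prop :=
  (∀ q : Fin n, (q : ℕ) < (p : ℕ) → v q = 0) ∧ 0 < v p

lemma posAt_smul {c : ℝ} (hc : 0 < c) (p : Fin n) (v : EuclideanSpace ℝ (Fin n)) :
    PosAt p (c • v) ↔ PosAt p v := by
  unfold PosAt
  simp only [PiLp.smul_apply, smul_eq_mul]
  constructor
  · rintro ⟨h1, h2⟩
    refine ⟨fun q hq => ?_, ?_⟩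
    · have h := h1 q hq
      rcases mul_eq_zero.mp h with h | h
      · exact absurd h hc.ne'
      · exact h
    · nlinarith
  · rintro ⟨h1, h2⟩
    exact ⟨fun q hq => by rw [h1 q hq, mul_zero], by positivity⟩

lemma posAt_uvec {x : Fin k → EuclideanSpace ℝ (Fin n)} {i j : Fin k}
    (hx : x i ≠ x j) (p : Fin n) :
    PosAt p (uvec x i j) ↔ PosAt p (x j - x i) := by
  have h0 : x j - x i ≠ 0 := sub_ne_zero.mpr hx.symm
  have hc : 0 < (‖x j - x i‖)⁻¹ := inv_pos.mpr (norm_pos_iff.mpr h0)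
  exact posAt_smul hc p _

lemma posAt_neg (p : Fin n) (v : EuclideanSpace ℝ (Fin n)) :
    PosAt p (-v) ↔ (∀ q : Fin n, (q : ℕ) < (p : ℕ) → v q = 0) ∧ v p < 0 := by
  unfold PosAt
  simp only [PiLp.neg_apply, neg_eq_zero, neg_pos]

lemma least_eq {v : EuclideanSpace ℝ (Fin n)} {p p' : Fin n}
    (h1 : ∀ q : Fin n, (q : ℕ) < (p : ℕ) → v q = 0) (h2 : v p ≠ 0)
    (h3 : ∀ q : Fin n, (q : ℕ) < (p' : ℕ) → v q = 0) (h4 : v p' ≠ 0) : p = p' := by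
  rcases lt_trichotomy (p : ℕ) (p' : ℕ) with h | h | h
  · exact absurd (h3 p h) h2
  · exact Fin.ext h
  · exact absurd (h1 p' h) h4

/-- The `n`-ordinal induced by a configuration of distinct points. -/
noncomputable def ordOf (x : Fin k → EuclideanSpace ℝ (Fin n))
    (hx : ∀ i j : Fin k, i ≠ j → x i ≠ x j) : NOrdinal n (Fin k) where
  rel p i j := PosAt p (uvec x i j)
  irrefl p i := by
    intro h
    have : uvec x i i = 0 := by
      unfold uvec; simp
    rw [this] at h
    exact lt_irrefl 0 h.2
  trich i j hij := by
    have hxij : x i ≠ x j := hx i j hij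
    set v : EuclideanSpace ℝ (Fin n) := x j - x i with hv
    have hv0 : v ≠ 0 := sub_ne_zero.mpr hxij.symm
    have hex : ∃ q : Fin n, v q ≠ 0 := by
      by_contra h
      push_neg at h
      exact hv0 (by ext q; exact h q)
    set s : Finset (Fin n) := Finset.univ.filter (fun q => v q ≠ 0) with hs
    have hsne : s.Nonempty := by
      obtain ⟨q, hq⟩ := hex
      exact ⟨q, by simp [hs, hq]⟩
    set m : Fin n := s.min' hsne with hm
    have hmne : v m ≠ 0 := by
      have := s.min'_mem hsne
      simpa [hs] using this
    have hbelow : ∀ q : Fin n, (q : ℕ) < (m : ℕ) → v q = 0 := by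
      intro q hq
      by_contra h
      have hqs : q ∈ s := by simp [hs, h]
      have := s.min'_le q hqs
      omega
    rcases lt_or_gt_of_ne hmne with hneg | hpos
    · -- v m < 0 : rel m j i
      refine ⟨(m, false), ?_, ?_⟩
      · show PosAt m (uvec x j i)
        rw [posAt_uvec hxij.symm]
        rw [show x i - x j = -v by rw [hv]; abel]
        exact (posAt_neg m v).mpr ⟨hbelow, hneg⟩
      · rintro ⟨p', d⟩ hp'
        cases d with
        | true =>
          have h' : PosAt p' v := (posAt_uvec hxij p').mp hp'
          have : p' = m := least_eq h'.1 h'.2.ne' hbelow hmne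
          subst this
          exact absurd h'.2 (not_lt.mpr hneg.le)
        | false =>
          have h' : PosAt p' (uvec x j i) := hp'
          rw [posAt_uvec hxij.symm, show x i - x j = -v by rw [hv]; abel,
            posAt_neg] at h'
          have : p' = m := least_eq h'.1 h'.2.ne hbelow hmne
          simp [this]
    · -- v m > 0 : rel m i j
      refine ⟨(m, true), ?_, ?_⟩
      · show PosAt m (uvec x i j)
        exact (posAt_uvec hxij m).mpr ⟨hbelow, hpos⟩
      · rintro ⟨p', d⟩ hp'
        cases d with
        | true =>
          have h' : PosAt p' v := (posAt_uvec hxij p').mp hp'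
          have : p' = m := least_eq h'.1 h'.2.ne' hbelow hmne
          simp [this]
        | false =>
          have h' : PosAt p' (uvec x j i) := hp'
          rw [posAt_uvec hxij.symm, show x i - x j = -v by rw [hv]; abel,
            posAt_neg] at h'
          have : p' = m := least_eq h'.1 h'.2.ne hbelow hmne
          subst this
          exact absurd h'.2 (not_lt.mpr hpos.le)
  trans p q i j l hpij hqjl := by
    have hij : i ≠ j := by
      rintro rfl
      have : uvec x i i = 0 := by unfold uvec; simp
      rw [this] at hpij
      exact lt_irrefl 0 hpij.2
    have hjl : j ≠ l := by
      rintro rfl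
      have : uvec x j j = 0 := by unfold uvec; simp
      rw [this] at hqjl
      exact lt_irrefl 0 hqjl.2
    have hv : PosAt p (x j - x i) := (posAt_uvec (hx i j hij) p).mp hpij
    have hw : PosAt q (x l - x j) := (posAt_uvec (hx j l hjl) q).mp hqjl
    have hsum : PosAt (min p q) (x l - x i) := by
      have heq : x l - x i = (x j - x i) + (x l - x j) := by abel
      rw [heq]
      have hmin : ((min p q : Fin n) : ℕ) = min (p : ℕ) (q : ℕ) := by
        rcases le_total p q with h | h
        · rw [min_eq_left h, min_eq_left (by exact_mod_cast h)]
        · rw [min_eq_right h, min_eq_right (by exact_mod_cast h)]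
      constructor
      · intro r hr
        rw [hmin] at hr
        have h1 : ((x j - x i) : EuclideanSpace ℝ (Fin n)) r = 0 :=
          hv.1 r (lt_of_lt_of_le hr (min_le_left _ _))
        have h2 : ((x l - x j) : EuclideanSpace ℝ (Fin n)) r = 0 :=
          hw.1 r (lt_of_lt_of_le hr (min_le_right _ _))
        show ((x j - x i) + (x l - x j) : EuclideanSpace ℝ (Fin n)) r = 0
        rw [PiLp.add_apply, h1, h2, add_zero]
      · show (0 : ℝ) < ((x j - x i) + (x l - x j) : EuclideanSpace ℝ (Fin n)) (min p q)
        rw [PiLp.add_apply]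
        rcases lt_trichotomy (p : ℕ) (q : ℕ) with h | h | h
        · have hm : min p q = p := min_eq_left (by exact_mod_cast h.le)
          rw [hm]
          have : ((x l - x j) : EuclideanSpace ℝ (Fin n)) p = 0 := hw.1 p h
          rw [this, add_zero]
          exact hv.2
        · have hpq : p = q := Fin.ext h
          subst hpq
          rw [min_self]
          exact add_pos hv.2 hw.2
        · have hm : min p q = q := min_eq_right (by exact_mod_cast h.le)
          rw [hm]
          have : ((x j - x i) : EuclideanSpace ℝ (Fin n)) q = 0 := hv.1 q h
          rw [this, zero_add]
          exact hw.2
    have hil : x i ≠ x l := by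
      intro h
      have : (x l - x i : EuclideanSpace ℝ (Fin n)) = 0 := by rw [h]; abel
      rw [this] at hsum
      have := hsum.2
      simp at this
    exact (posAt_uvec hil (min p q)).mpr hsum

lemma rel_transfer {x : Fin k → EuclideanSpace ℝ (Fin n)}
    {O O' : NOrdinal n (Fin k)} (hO : x ∈ FoxNeuwirth O) (hO' : x ∈ FoxNeuwirth O')
    {p : Fin n} {i j : Fin k} (h : O.rel p i j) : O'.rel p i j := by
  have hij : i ≠ j := by rintro rfl; exact O.irrefl p i h
  have hxij : x i ≠ x j := hO.1 i j hij
  have hv : PosAt p (uvec x i j) := ⟨(hO.2 p i j h).1, (hO.2 p i j h).2⟩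
  have hvv : PosAt p (x j - x i) := (posAt_uvec hxij p).mp hv
  obtain ⟨⟨p', d⟩, hpd, _⟩ := O'.trich i j hij
  cases d with
  | true =>
    have hrel : O'.rel p' i j := hpd
    have h' : PosAt p' (x j - x i) :=
      (posAt_uvec hxij p').mp ⟨(hO'.2 p' i j hrel).1, (hO'.2 p' i j hrel).2⟩
    have : p' = p := least_eq h'.1 h'.2.ne' hvv.1 hvv.2.ne'
    rwa [this] at hrel
  | false =>
    have hrel : O'.rel p' j i := hpd
    have h' : PosAt p' (uvec x j i) := ⟨(hO'.2 p' j i hrel).1, (hO'.2 p' j i hrel).2⟩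
    rw [posAt_uvec hxij.symm, show x i - x j = -(x j - x i) by abel, posAt_neg] at h'
    have : p' = p := least_eq h'.1 h'.2.ne hvv.1 hvv.2.ne'
    subst this
    exact absurd hvv.2 (not_lt.mpr h'.2.le)

end Aux

theorem conf_eq_union_foxNeuwirth (n k : ℕ) :
    -- the configuration space is the union of the Fox–Neuwirth cells over all
    -- n-ordinal structures on {1, …, k}
    ({ x : Fin k → EuclideanSpace ℝ (Fin n) | ∀ i j : Fin k, i ≠ j → x i ≠ x j }
        = ⋃ O : NOrdinal n (Fin k), FoxNeuwirth O) ∧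
    -- the cells of distinct n-ordinal structures are pairwise disjoint
    (∀ O O' : NOrdinal n (Fin k),
      (¬ ∀ p (i j : Fin k), O.rel p i j ↔ O'.rel p i j) →
        Disjoint (FoxNeuwirth O) (FoxNeuwirth O')) := by
  constructor
  · ext x
    simp only [Set.mem_setOf_eq, Set.mem_iUnion]
    constructor
    · intro hx
      refine ⟨ordOf x hx, hx, ?_⟩
      intro p i j h
      exact ⟨h.1, h.2⟩
    · rintro ⟨O, hO⟩
      exact hO.1
  · intro O O' hne
    rw [Set.disjoint_left]
    intro x hO hO'
    apply hne
    intro p i j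
    exact ⟨fun h => rel_transfer hO hO' h, fun h => rel_transfer hO' hO h⟩
end

section
/- For each configuration x in Conf_k(R^n), define relations on {1,...,k} by: i <_p j iff the unit vector u_{ij}(x) has its first p coordinates zero and its (p+1)-st coordinate strictly positive. Then these relations make {1,...,k} into an n-ordinal. -/
private lemma uvec_apply' {n k : ℕ} (x : Fin k → EuclideanSpace ℝ (Fin n)) (i j : Fin k)
    (q : Fin n) : uvec x i j q = ‖x j - x i‖⁻¹ * ((x j) q - (x i) q) := rfl

private lemma uvec_zero_iff {n k : ℕ} (x : Fin k → EuclideanSpace ℝ (Fin n)) {i j : Fin k}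
    (h : x i ≠ x j) (q : Fin n) : uvec x i j q = 0 ↔ (x j) q - (x i) q = 0 := by
  have hv : (0:ℝ) < ‖x j - x i‖⁻¹ :=
    inv_pos.mpr (norm_pos_iff.mpr (sub_ne_zero.mpr (Ne.symm h)))
  rw [uvec_apply']
  constructor
  · intro hh
    rcases mul_eq_zero.mp hh with h1 | h1
    · exact absurd h1 (ne_of_gt hv)
    · exact h1
  · intro hh; rw [hh, mul_zero]

private lemma uvec_pos_iff {n k : ℕ} (x : Fin k → EuclideanSpace ℝ (Fin n)) {i j : Fin k}
    (h : x i ≠ x j) (q : Fin n) : 0 < uvec x i j q ↔ 0 < (x j) q - (x i) q := by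
  have hv : (0:ℝ) < ‖x j - x i‖⁻¹ :=
    inv_pos.mpr (norm_pos_iff.mpr (sub_ne_zero.mpr (Ne.symm h)))
  rw [uvec_apply']
  exact mul_pos_iff_of_pos_left hv

theorem config_nOrdinal {n k : ℕ} (x : Fin k → EuclideanSpace ℝ (Fin n))
    (hx : ∀ i j : Fin k, i ≠ j → x i ≠ x j) :
    ∃ O : NOrdinal n (Fin k), ∀ p (i j : Fin k),
      O.rel p i j ↔
        ((∀ q : Fin n, (q : ℕ) < (p : ℕ) → uvec x i j q = 0) ∧ 0 < uvec x i j p) := by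
  classical
  set R : Fin n → Fin k → Fin k → Prop := fun p i j =>
    (∀ q : Fin n, (q : ℕ) < (p : ℕ) → uvec x i j q = 0) ∧ 0 < uvec x i j p with hR
  -- rel implies distinct
  have hne : ∀ p i j, R p i j → i ≠ j := by
    rintro p i j ⟨_, hpos⟩ rfl
    simp [uvec] at hpos
  refine ⟨⟨R, ?_, ?_, ?_⟩, fun p i j => Iff.rfl⟩
  · intro p a h
    exact (hne p a a h) rfl
  · -- trichotomy
    intro a b hab
    have hxab : x a ≠ x b := hx a b hab
    -- there is a nonzero coordinate of x b - x a
    have hvne : ∃ q : Fin n, (x b) q - (x a) q ≠ 0 := by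
      by_contra hc
      push_neg at hc
      apply hxab
      refine PiLp.ext fun q => ?_
      have := hc q
      linarith [this]
    set s : Finset (Fin n) := Finset.univ.filter (fun q => (x b) q - (x a) q ≠ 0) with hs
    have hsne : s.Nonempty := by
      obtain ⟨q, hq⟩ := hvne
      exact ⟨q, by simp [hs, hq]⟩
    set p := s.min' hsne with hp
    have hpmem : (x b) p - (x a) p ≠ 0 := by
      have := s.min'_mem hsne
      simpa [hs] using this
    have hbelow : ∀ q : Fin n, (q : ℕ) < (p : ℕ) → (x b) q - (x a) q = 0 := by
      intro q hq
      by_contra hc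
      have : p ≤ q := s.min'_le q (by simp [hs, hc])
      exact absurd hq (not_lt.mpr this)
    have hbelow' : ∀ q : Fin n, (q : ℕ) < (p : ℕ) → uvec x a b q = 0 :=
      fun q hq => (uvec_zero_iff x hxab q).mpr (hbelow q hq)
    have hbelow'' : ∀ q : Fin n, (q : ℕ) < (p : ℕ) → uvec x b a q = 0 := by
      intro q hq
      rw [uvec_zero_iff x hxab.symm q]
      have := hbelow q hq; linarith
    rcases lt_or_gt_of_ne hpmem with hneg | hpos
    · -- rel p b a
      refine ⟨(p, false), ?_, ?_⟩
      · simp only [if_neg]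
        exact ⟨hbelow'', (uvec_pos_iff x hxab.symm p).mpr (by linarith)⟩
      · rintro ⟨q, d⟩ hqd
        cases d with
        | false =>
          have hrel : R q b a := by simpa using hqd
          have hqp : q = p := by
            by_contra hqp
            rcases lt_or_gt_of_ne (fun h : (q:ℕ) = (p:ℕ) => hqp (Fin.ext h)) with h1 | h1
            · have hz : (x b) q - (x a) q = 0 := hbelow q h1
              have := (uvec_pos_iff x hxab.symm q).mp hrel.2
              linarith
            · have := (uvec_zero_iff x hxab.symm p).mp (hrel.1 p h1)
              apply hpmem; linarith
          rw [hqp]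
        | true =>
          exfalso
          have hrel : R q a b := by simpa using hqd
          have hqp : q = p := by
            by_contra hqp
            rcases lt_or_gt_of_ne (fun h : (q:ℕ) = (p:ℕ) => hqp (Fin.ext h)) with h1 | h1
            · have hz : (x b) q - (x a) q = 0 := hbelow q h1
              have := (uvec_pos_iff x hxab q).mp hrel.2
              linarith
            · have := (uvec_zero_iff x hxab p).mp (hrel.1 p h1)
              apply hpmem; linarith
          rw [hqp] at hrel
          have := (uvec_pos_iff x hxab p).mp hrel.2
          linarith
    · -- rel p a b
      refine ⟨(p, true), ?_, ?_⟩
      · simp only [if_pos]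
        exact ⟨hbelow', (uvec_pos_iff x hxab p).mpr hpos⟩
      · rintro ⟨q, d⟩ hqd
        cases d with
        | true =>
          have hrel : R q a b := by simpa using hqd
          have hqp : q = p := by
            by_contra hqp
            rcases lt_or_gt_of_ne (fun h : (q:ℕ) = (p:ℕ) => hqp (Fin.ext h)) with h1 | h1
            · have hz : (x b) q - (x a) q = 0 := hbelow q h1
              have := (uvec_pos_iff x hxab q).mp hrel.2
              linarith
            · have := (uvec_zero_iff x hxab p).mp (hrel.1 p h1)
              apply hpmem; linarith
          rw [hqp]
        | false =>
          exfalso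
          have hrel : R q b a := by simpa using hqd
          have hqp : q = p := by
            by_contra hqp
            rcases lt_or_gt_of_ne (fun h : (q:ℕ) = (p:ℕ) => hqp (Fin.ext h)) with h1 | h1
            · have hz : (x b) q - (x a) q = 0 := hbelow q h1
              have := (uvec_pos_iff x hxab.symm q).mp hrel.2
              linarith
            · have := (uvec_zero_iff x hxab.symm p).mp (hrel.1 p h1)
              apply hpmem; linarith
          rw [hqp] at hrel
          have := (uvec_pos_iff x hxab.symm p).mp hrel.2
          linarith
  · -- transitivity
    intro p q a b c hab hbc
    have hab' := hne p a b hab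
    have hbc' := hne q b c hbc
    have hxab := hx a b hab'
    have hxbc := hx b c hbc'
    set m := min p q with hm
    -- coordinate facts
    have habz : ∀ r : Fin n, (r:ℕ) < (p:ℕ) → (x b) r - (x a) r = 0 :=
      fun r hr => (uvec_zero_iff x hxab r).mp (hab.1 r hr)
    have hbcz : ∀ r : Fin n, (r:ℕ) < (q:ℕ) → (x c) r - (x b) r = 0 :=
      fun r hr => (uvec_zero_iff x hxbc r).mp (hbc.1 r hr)
    have habp : 0 < (x b) p - (x a) p := (uvec_pos_iff x hxab p).mp hab.2
    have hbcq : 0 < (x c) q - (x b) q := (uvec_pos_iff x hxbc q).mp hbc.2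
    have hmz : ∀ r : Fin n, (r:ℕ) < (m:ℕ) → (x c) r - (x a) r = 0 := by
      intro r hr
      have hle1 : (m:ℕ) ≤ (p:ℕ) := Fin.le_def.mp (min_le_left p q)
      have hle2 : (m:ℕ) ≤ (q:ℕ) := Fin.le_def.mp (min_le_right p q)
      have h1 := habz r (lt_of_lt_of_le hr hle1)
      have h2 := hbcz r (lt_of_lt_of_le hr hle2)
      linarith
    have habm : 0 ≤ (x b) m - (x a) m := by
      rcases lt_or_eq_of_le (min_le_left p q) with h | h
      · have := habz m (by exact_mod_cast (Fin.lt_def.mp h)); linarith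
      · have : m = p := by rw [hm, h]
        rw [this]; linarith
    have hbcm : 0 ≤ (x c) m - (x b) m := by
      rcases lt_or_eq_of_le (min_le_right p q) with h | h
      · have := hbcz m (by exact_mod_cast (Fin.lt_def.mp h)); linarith
      · have : m = q := by rw [hm, h]
        rw [this]; linarith
    have hacm : 0 < (x c) m - (x a) m := by
      rcases min_cases p q with ⟨h, _⟩ | ⟨h, _⟩
      · have hmp : m = p := by rw [hm, h]
        have : 0 < (x b) m - (x a) m := by rw [hmp]; exact habp
        linarith
      · have hmq : m = q := by rw [hm, h]
        have : 0 < (x c) m - (x b) m := by rw [hmq]; exact hbcq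
        linarith
    have hxac : x a ≠ x c := by
      intro h
      rw [h] at hacm
      simp at hacm
    refine ⟨fun r hr => (uvec_zero_iff x hxac r).mpr (hmz r hr),
      (uvec_pos_iff x hxac m).mpr hacm⟩
end
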